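/- Let ⫝ be a ternary relation on subsets of a fixed set M (an abstract independence relation) satisfying invariance-free versions of: symmetry, monotonicity, right base monotonicity, left transitivity, right extension, and local character with bound κ(A) for finite A being at most |T|⁺ for a fixed infinite cardinal |T|. Let κ > |T|⁺ be a regular cardinal, let (M_i)_{i<κ} be a continuous increasing chain of subsets each of cardinality < κ, with union M of cardinality κ. Then for every finite tuple a there exists i < κ such that a ⫝_{M_i} M. -/

import Mathlib

open Cardinal

/-- Local character over continuous chains, from the abstract properties of an
independence relation (`ind A C B` is read as "`A` is independent from `B` over `C`"). -/
theorem stmt_4 {Ω : Type*} (ind : Set Ω → Set Ω → Set Ω → Prop)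
    (symm : ∀ A C B, ind A C B ↔ ind B C A)
    (monoR : ∀ A C B B', ind A C B → B' ⊆ B → ind A C B')
    (monoL : ∀ A C B A', ind A C B → A' ⊆ A → ind A' C B)
    (baseMonoR : ∀ A D C B, ind A D B → D ⊆ C → C ⊆ B → ind A C B)
    (transL : ∀ A D C B, D ⊆ C → C ⊆ B → ind B C A → ind C D A → ind B D A)
    (extR : ∀ A C B B', ind A C B → B ⊆ B' → ∃ A', ind A' C B')
    (T : Cardinal) (hT : ℵ₀ ≤ T)
    (localChar : ∀ A : Set Ω, A.Finite → ∀ B : Set Ω,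
      ∃ C ⊆ B, #C < Order.succ T ∧ ind A C B)
    (κ : Cardinal) (hreg : κ.IsRegular) (hκ : Order.succ T < κ)
    (M : Ordinal → Set Ω)
    (hchain : ∀ i j : Ordinal, i ≤ j → j < κ.ord → M i ⊆ M j)
    (hcont : ∀ i : Ordinal, i < κ.ord → Order.IsSuccLimit i → M i = ⋃ j < i, M j)
    (hsize : ∀ i : Ordinal, i < κ.ord → #(M i) < κ)
    (hunion : #(⋃ i ∈ {j : Ordinal | j < κ.ord}, M i) = κ)
    (a : Set Ω) (ha : a.Finite) :
    ∃ i < κ.ord, ind a (M i) (⋃ j ∈ {j : Ordinal | j < κ.ord}, M j) := by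
  set U := ⋃ j ∈ {j : Ordinal | j < κ.ord}, M j with hU
  obtain ⟨C, hCU, hCcard, hind⟩ := localChar a ha U
  -- each element of C lies in some M_j, j < κ.ord
  have hx : ∀ x : C, ∃ j, j < κ.ord ∧ (x : Ω) ∈ M j := by
    intro x
    have := hCU x.2
    simp only [hU, Set.mem_iUnion, Set.mem_setOf_eq] at this
    obtain ⟨j, hj, hxj⟩ := this
    exact ⟨j, hj, hxj⟩
  choose f hf1 hf2 using hx
  have hCκ : #C < κ := hCcard.trans hκ
  have hsup : iSup f < κ.ord :=
    Cardinal.iSup_lt_ord_of_isRegular hreg hCκ hf1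
  refine ⟨iSup f, hsup, ?_⟩
  apply baseMonoR a C _ _ hind
  · intro x hx
    exact hchain (f ⟨x, hx⟩) _ (le_ciSup (f := f) ⟨κ.ord, by rintro _ ⟨y, rfl⟩; exact (hf1 y).le⟩ (⟨x, hx⟩ : C)) hsup (hf2 ⟨x, hx⟩)
  · intro x hx
    simp only [hU, Set.mem_iUnion, Set.mem_setOf_eq]
    exact ⟨_, hsup, hx⟩
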